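/- In the discrete-time networked SEIR model under the well-posedness assumptions, the exposed and infected levels of every node converge to zero: lim_{k→∞} e_i^k = 0 and lim_{k→∞} p_i^k = 0 for all nodes i. -/

import Mathlib

/-- In the networked SEIR model the exposed and infected levels
of every node converge to zero. -/
theorem seir_e_p_to_zero
    (n : ℕ) (h : ℝ) (a : Fin n → Fin n → ℝ) (βE β σ γ : Fin n → ℝ)
    (s e p r : ℕ → Fin n → ℝ)
    (hh : 0 < h)
    (ha : ∀ i j, 0 ≤ a i j) (hβE : ∀ i, 0 ≤ βE i) (hβ : ∀ i, 0 ≤ β i)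
    (hγ : ∀ i, 0 < h * γ i ∧ h * γ i < 1)
    (hσ : ∀ i, 0 < h * σ i ∧ h * σ i ≤ 1)
    (hba : ∀ i, 0 ≤ h * (βE i + β i) * ∑ j, a i j ∧ h * (βE i + β i) * ∑ j, a i j < 1)
    (hs : ∀ k i, s (k+1) i = s k i -
      h * s k i * (βE i * ∑ j, a i j * e k j + β i * ∑ j, a i j * p k j))
    (he : ∀ k i, e (k+1) i = e k i +
      h * s k i * (βE i * ∑ j, a i j * e k j + β i * ∑ j, a i j * p k j) - h * σ i * e k i)
    (hp : ∀ k i, p (k+1) i = p k i + h * (σ i * e k i - γ i * p k i))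
    (hr : ∀ k i, r (k+1) i = r k i + h * γ i * p k i)
    (hinit : ∀ i, s 0 i ∈ Set.Icc (0:ℝ) 1 ∧ e 0 i ∈ Set.Icc (0:ℝ) 1 ∧
      p 0 i ∈ Set.Icc (0:ℝ) 1 ∧ r 0 i ∈ Set.Icc (0:ℝ) 1 ∧
      s 0 i + e 0 i + p 0 i + r 0 i = 1) :
    ∀ i, Filter.Tendsto (fun k => e k i) Filter.atTop (nhds 0) ∧
      Filter.Tendsto (fun k => p k i) Filter.atTop (nhds 0) := by

  have inv : ∀ k, ∀ i, 0 ≤ s k i ∧ 0 ≤ e k i ∧ 0 ≤ p k i ∧ 0 ≤ r k i ∧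
      s k i + e k i + p k i + r k i = 1 := by
    intro k
    induction k with
    | zero =>
      intro i
      obtain ⟨hs0, he0, hp0, hr0, hsum⟩ := hinit i
      exact ⟨hs0.1, he0.1, hp0.1, hr0.1, hsum⟩
    | succ k ih =>
      intro i
      obtain ⟨hsk, hek, hpk, hrk, hsum⟩ := ih i
      have hι0 : 0 ≤ βE i * ∑ j, a i j * e k j + β i * ∑ j, a i j * p k j := by
        have h1 : 0 ≤ ∑ j, a i j * e k j :=
          Finset.sum_nonneg fun j _ => mul_nonneg (ha i j) (ih j).2.1
        have h2 : 0 ≤ ∑ j, a i j * p k j :=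
          Finset.sum_nonneg fun j _ => mul_nonneg (ha i j) (ih j).2.2.1
        exact add_nonneg (mul_nonneg (hβE i) h1) (mul_nonneg (hβ i) h2)
      have hι1 : h * (βE i * ∑ j, a i j * e k j + β i * ∑ j, a i j * p k j) ≤
          h * (βE i + β i) * ∑ j, a i j := by
        have h1 : ∑ j, a i j * e k j ≤ ∑ j, a i j := by
          apply Finset.sum_le_sum
          intro j _
          obtain ⟨hsj, hej, hpj, hrj, hsj2⟩ := ih j
          have : e k j ≤ 1 := by linarith
          exact mul_le_of_le_one_right (ha i j) this
        have h2 : ∑ j, a i j * p k j ≤ ∑ j, a i j := by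
          apply Finset.sum_le_sum
          intro j _
          obtain ⟨hsj, hej, hpj, hrj, hsj2⟩ := ih j
          have : p k j ≤ 1 := by linarith
          exact mul_le_of_le_one_right (ha i j) this
        have hsumA : 0 ≤ ∑ j, a i j :=
          Finset.sum_nonneg fun j _ => ha i j
        have t1 : βE i * ∑ j, a i j * e k j ≤ βE i * ∑ j, a i j :=
          mul_le_mul_of_nonneg_left h1 (hβE i)
        have t2 : β i * ∑ j, a i j * p k j ≤ β i * ∑ j, a i j :=
          mul_le_mul_of_nonneg_left h2 (hβ i)
        nlinarith [hh.le, t1, t2]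
      have hs' : 0 ≤ s (k+1) i := by
        rw [hs k i]
        nlinarith [(hba i).2, mul_nonneg hh.le hι0]
      have he' : 0 ≤ e (k+1) i := by
        rw [he k i]
        nlinarith [(hσ i).2, mul_nonneg (mul_nonneg hh.le hsk) hι0]
      have hp' : 0 ≤ p (k+1) i := by
        rw [hp k i]
        nlinarith [(hγ i).2, (hσ i).1]
      have hr' : 0 ≤ r (k+1) i := by
        rw [hr k i]
        nlinarith [(hγ i).1]
      have hsum' : s (k+1) i + e (k+1) i + p (k+1) i + r (k+1) i = 1 := by
        rw [hs k i, he k i, hp k i, hr k i]; ring_nf; linarith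
      exact ⟨hs', he', hp', hr', hsum'⟩
  intro i
  have hγi := hγ i
  have hσi := hσ i
  have hγne : h * γ i ≠ 0 := ne_of_gt hγi.1
  have hσne : h * σ i ≠ 0 := ne_of_gt hσi.1
  have hmono : Monotone (fun k => r k i) := by
    apply monotone_nat_of_le_succ
    intro k
    have := hr k i
    nlinarith [(inv k i).2.2.1, hγi.1, mul_nonneg (le_of_lt hγi.1) (inv k i).2.2.1]
  have hbdd : BddAbove (Set.range fun k => r k i) := by
    refine ⟨1, ?_⟩
    rintro x ⟨k, rfl⟩
    obtain ⟨h1, h2, h3, h4, h5⟩ := inv k i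
    simpa using by linarith
  have hrlim : Filter.Tendsto (fun k => r k i) Filter.atTop (nhds (⨆ k, r k i)) :=
    tendsto_atTop_ciSup hmono hbdd
  have hrlim' : Filter.Tendsto (fun k => r (k+1) i) Filter.atTop (nhds (⨆ k, r k i)) :=
    hrlim.comp (Filter.tendsto_add_atTop_nat 1)
  have hdiff : Filter.Tendsto (fun k => r (k+1) i - r k i) Filter.atTop (nhds 0) := by
    have := hrlim'.sub hrlim
    simpa using this
  have hplim : Filter.Tendsto (fun k => p k i) Filter.atTop (nhds 0) := by
    have heq : (fun k => p k i) = fun k => (h * γ i)⁻¹ * (r (k+1) i - r k i) := by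
      funext k
      rw [hr k i]
      have hγ0 : γ i ≠ 0 := by rintro h0; simp [h0] at hγne
      field_simp
      ring
    rw [heq]
    simpa using hdiff.const_mul ((h * γ i)⁻¹)
  refine ⟨?_, hplim⟩
  have hplim' : Filter.Tendsto (fun k => p (k+1) i) Filter.atTop (nhds 0) :=
    hplim.comp (Filter.tendsto_add_atTop_nat 1)
  have heq : (fun k => e k i) =
      fun k => (h * σ i)⁻¹ * (p (k+1) i - p k i + h * γ i * p k i) := by
    funext k
    rw [hp k i]
    have hσ0 : σ i ≠ 0 := by rintro h0; simp [h0] at hσne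
    field_simp
    ring
  rw [heq]
  have hl : Filter.Tendsto (fun k => p (k+1) i - p k i + h * γ i * p k i)
      Filter.atTop (nhds 0) := by
    have h1 := (hplim'.sub hplim).add (hplim.const_mul (h * γ i))
    simpa [mul_comm] using h1
  simpa using hl.const_mul ((h * σ i)⁻¹)
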